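/- The Agreeable Linear Society Theorem: let 2 ≤ k ≤ m be integers. In a (k,m)-agreeable linear society with n voters, there is a platform approved by at least n(k-1)/(m-1) of the voters. Precisely: if X is a closed subset of ℝ, V is a finite set of n ≥ m voters with approval sets A_v = X ∩ I_v (I_v empty or a closed bounded interval), and every m-element subset of V contains k voters whose approval sets have a common point, then there exists p ∈ X lying in at least n(k-1)/(m-1) of the sets A_v. -/

import Mathlib

open Finset

lemma socMex_exists (F : Finset ℕ) : ∃ c, c ∉ F :=
  ⟨F.sup id + 1, fun h => by have := Finset.le_sup (f := id) h; simp only [id_eq] at this; omega⟩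

noncomputable def socMex (F : Finset ℕ) : ℕ := Nat.find (socMex_exists F)

lemma socMex_not_mem (F : Finset ℕ) : socMex F ∉ F := Nat.find_spec (socMex_exists F)

lemma socMex_le_card (F : Finset ℕ) : socMex F ≤ F.card := by
  have hsub : Finset.range (socMex F) ⊆ F := by
    intro c hc
    have := Nat.find_min (socMex_exists F) (Finset.mem_range.mp hc)
    exact not_not.mp this
  calc socMex F = (Finset.range (socMex F)).card := (Finset.card_range _).symm
    _ ≤ F.card := Finset.card_le_card hsub

open Classical in
lemma color_exists {ι : Type*} (A : ι → Set ℝ) (l : ι → ℝ) (S0 : Finset ι)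
    (key : ∀ u ∈ S0, ∀ v ∈ S0, l u ≤ l v → (A u ∩ A v).Nonempty → l v ∈ A u)
    (hlm : ∀ v ∈ S0, l v ∈ A v) (a : ℕ) :
    ∀ T : Finset ι, T ⊆ S0 →
      (∀ v ∈ T, (T.filter (fun u => l v ∈ A u)).card ≤ a) →
      ∃ f : ι → ℕ, (∀ v ∈ T, f v < a) ∧
        ∀ u ∈ T, ∀ v ∈ T, u ≠ v → f u = f v → A u ∩ A v = ∅ := by
  classical
  intro T
  induction T using Finset.strongInduction with
  | _ T ih =>
    intro hTS hcnt
    rcases T.eq_empty_or_nonempty with rfl | hTne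
    · exact ⟨fun _ => 0, fun v hv => absurd hv (Finset.notMem_empty v),
        fun u hu => absurd hu (Finset.notMem_empty u)⟩
    obtain ⟨v, hvT, hvmax⟩ := T.exists_max_image l hTne
    set T' : Finset ι := T.erase v with hT'
    have hT'T : T' ⊆ T := Finset.erase_subset _ _
    have hss : T' ⊂ T := Finset.erase_ssubset hvT
    obtain ⟨f', hf'1, hf'2⟩ := ih T' hss (hT'T.trans hTS)
      (fun w hw => le_trans (Finset.card_le_card
        (Finset.filter_subset_filter _ hT'T)) (hcnt w (hT'T hw)))
    set N : Finset ι := T'.filter (fun u => (A u ∩ A v).Nonempty) with hN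
    set c : ℕ := socMex (N.image f') with hc
    have hvN : v ∉ N := fun h => (Finset.mem_erase.mp (Finset.mem_filter.mp h).1).1 rfl
    have hNsub : insert v N ⊆ T.filter (fun u => l v ∈ A u) := by
      intro u hu
      rcases Finset.mem_insert.mp hu with rfl | huN
      · exact Finset.mem_filter.mpr ⟨hvT, hlm u (hTS hvT)⟩
      · obtain ⟨huT', hint⟩ := Finset.mem_filter.mp huN
        have huT : u ∈ T := hT'T huT'
        exact Finset.mem_filter.mpr ⟨huT,
          key u (hTS huT) v (hTS hvT) (hvmax u huT) hint⟩
    have hca : c < a := by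
      have h1 : c ≤ N.card := le_trans (socMex_le_card _) (Finset.card_image_le)
      have h2 : N.card + 1 ≤ a := by
        have := Finset.card_le_card hNsub
        rw [Finset.card_insert_of_notMem hvN] at this
        exact le_trans this (hcnt v hvT)
      omega
    refine ⟨Function.update f' v c, ?_, ?_⟩
    · intro w hw
      rcases eq_or_ne w v with rfl | hwv
      · rw [Function.update_self]; exact hca
      · rw [Function.update_of_ne hwv]
        exact hf'1 w (Finset.mem_erase.mpr ⟨hwv, hw⟩)
    · intro u hu w hw huw hfeq
      by_cases huv : u = v
      · have hwv : w ≠ v := fun h => huw (huv.trans h.symm)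
        rw [huv, Function.update_self, Function.update_of_ne hwv] at hfeq
        rw [huv]
        by_contra hcon
        have hwN : w ∈ N := Finset.mem_filter.mpr ⟨Finset.mem_erase.mpr ⟨hwv, hw⟩,
          (Set.inter_comm (A v) (A w)) ▸ Set.nonempty_iff_ne_empty.mpr hcon⟩
        have hmem := Finset.mem_image_of_mem f' hwN
        rw [← hfeq, hc] at hmem
        exact socMex_not_mem (N.image f') hmem
      · by_cases hwv : w = v
        · rw [hwv, Function.update_self, Function.update_of_ne huv] at hfeq
          rw [hwv]
          by_contra hcon
          have huN : u ∈ N := Finset.mem_filter.mpr ⟨Finset.mem_erase.mpr ⟨huv, hu⟩,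
            Set.nonempty_iff_ne_empty.mpr hcon⟩
          have hmem := Finset.mem_image_of_mem f' huN
          rw [hfeq, hc] at hmem
          exact socMex_not_mem (N.image f') hmem
        · rw [Function.update_of_ne huv, Function.update_of_ne hwv] at hfeq
          exact hf'2 u (Finset.mem_erase.mpr ⟨huv, hu⟩) w (Finset.mem_erase.mpr ⟨hwv, hw⟩) huw hfeq

/-- **The Agreeable Linear Society Theorem.**
Let `2 ≤ k ≤ m`.  In a `(k,m)`-agreeable linear society with `n ≥ m` voters
(every `m`-element set of voters contains `k` voters whose approval sets have a
common point), there is a platform approved by at least `n * (k-1) / (m-1)`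
of the voters. -/
theorem agreeable_linear_society_km
    {ι : Type*} (k m : ℕ) (hk : 2 ≤ k) (hkm : k ≤ m)
    (X : Set ℝ) (hX : IsClosed X)
    (V : Finset ι) (n : ℕ) (hn : V.card = n) (hnm : m ≤ n)
    (A : ι → Set ℝ)
    (hA : ∀ v ∈ V, A v = ∅ ∨ ∃ a b : ℝ, a ≤ b ∧ A v = X ∩ Set.Icc a b)
    (hagree : ∀ W ⊆ V, W.card = m →
      ∃ K ⊆ W, K.card = k ∧ (⋂ v ∈ K, A v).Nonempty) :
    ∃ p ∈ X, ((n : ℝ) * (k - 1)) / (m - 1) ≤ {v ∈ (V : Set ι) | p ∈ A v}.ncard := by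
  classical
  set l : ι → ℝ := fun v => sInf (A v) with hldef
  set r : ι → ℝ := fun v => sSup (A v) with hrdef
  set S : Finset ι := V.filter (fun v => (A v).Nonempty) with hSdef
  set E : Finset ι := V.filter (fun v => ¬ (A v).Nonempty) with hEdef
  have hSV : S ⊆ V := filter_subset _ _
  -- basic structure of nonempty approval sets
  have hbasic : ∀ v ∈ S, l v ∈ A v ∧ A v = X ∩ Set.Icc (l v) (r v) := by
    intro v hv
    obtain ⟨hvV, hvne⟩ := mem_filter.mp hv
    rcases hA v hvV with h0 | ⟨a0, b0, hab, hAv⟩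
    · rw [h0] at hvne; exact absurd hvne (by simp)
    have hcomp : IsCompact (A v) := by rw [hAv]; exact isCompact_Icc.inter_left hX
    have hlmem : l v ∈ A v := hcomp.sInf_mem hvne
    have hrmem : r v ∈ A v := hcomp.sSup_mem hvne
    refine ⟨hlmem, Set.Subset.antisymm ?_ ?_⟩
    · intro x hx
      exact ⟨(hAv ▸ hx : x ∈ X ∩ Set.Icc a0 b0).1,
        csInf_le hcomp.bddBelow hx, le_csSup hcomp.bddAbove hx⟩
    · rintro x ⟨hxX, hx1, hx2⟩
      rw [hAv]
      have ha0 : a0 ≤ l v := (hAv ▸ hlmem : l v ∈ X ∩ Set.Icc a0 b0).2.1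
      have hb0 : r v ≤ b0 := (hAv ▸ hrmem : r v ∈ X ∩ Set.Icc a0 b0).2.2
      exact ⟨hxX, le_trans ha0 hx1, le_trans hx2 hb0⟩
  have hsubX : ∀ v ∈ S, A v ⊆ X := by
    intro v hv
    rw [(hbasic v hv).2]; exact Set.inter_subset_left
  -- key geometric fact
  have hkey : ∀ u ∈ S, ∀ v ∈ S, l u ≤ l v → (A u ∩ A v).Nonempty → l v ∈ A u := by
    rintro u hu v hv hle ⟨y, hyu, hyv⟩
    have h1 : l v ≤ y := ((hbasic v hv).2 ▸ hyv : y ∈ X ∩ Set.Icc (l v) (r v)).2.1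
    have h2 : y ≤ r u := ((hbasic u hu).2 ▸ hyu : y ∈ X ∩ Set.Icc (l u) (r u)).2.2
    rw [(hbasic u hu).2]
    exact ⟨hsubX v hv (hbasic v hv).1, hle, le_trans h1 h2⟩
  -- get one m-subset to bound a from below
  have hmV : m ≤ V.card := by omega
  obtain ⟨W0, hW0V, hW0card⟩ := Finset.exists_subset_card_eq hmV
  obtain ⟨K0, hK0W, hK0card, hK0ne'⟩ := hagree W0 hW0V hW0card
  obtain ⟨x0, hx0⟩ := hK0ne'
  have hx0mem : ∀ v ∈ K0, x0 ∈ A v := fun v hv => Set.mem_iInter₂.mp hx0 v hv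
  have hK0S : K0 ⊆ S := fun v hv =>
    mem_filter.mpr ⟨hW0V (hK0W hv), ⟨x0, hx0mem v hv⟩⟩
  have hK0ne : K0.Nonempty := card_pos.mp (by omega)
  have hSne : S.Nonempty := hK0ne.mono hK0S
  -- maximum agreement at a left endpoint
  obtain ⟨v0, hv0S, hv0max⟩ :=
    S.exists_max_image (fun v => (S.filter (fun u => l v ∈ A u)).card) hSne
  set a : ℕ := (S.filter (fun u => l v0 ∈ A u)).card with hadef
  -- k ≤ a
  obtain ⟨vs, hvsK, hvsmax⟩ := K0.exists_max_image l hK0ne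
  have hka : k ≤ a := by
    have hsub : K0 ⊆ S.filter (fun u => l vs ∈ A u) := by
      intro u hu
      exact mem_filter.mpr ⟨hK0S hu,
        hkey u (hK0S hu) vs (hK0S hvsK) (hvsmax u hu) ⟨x0, hx0mem u hu, hx0mem vs hvsK⟩⟩
    calc k = K0.card := hK0card.symm
      _ ≤ (S.filter (fun u => l vs ∈ A u)).card := card_le_card hsub
      _ ≤ a := hv0max vs (hK0S hvsK)
  -- coloring
  obtain ⟨f, hf1, hf2⟩ := color_exists A l S hkey (fun v hv => (hbasic v hv).1) a S
    (Finset.Subset.refl S) (fun v hv => hv0max v hv)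
  set B : ℕ → Finset ι := fun c => S.filter (fun v => f v = c) with hBdef
  have hpart : S.card = ∑ c ∈ Finset.range a, (B c).card :=
    card_eq_sum_card_fiberwise (fun v hv => mem_range.mpr (hf1 v hv))
  -- union of k-1 classes and empties has at most m-1 elements
  have hTbound : ∀ T ∈ Finset.powersetCard (k-1) (Finset.range a),
      (∑ c ∈ T, (B c).card) + E.card + 1 ≤ m := by
    intro T hT
    obtain ⟨hTsub, hTcard⟩ := mem_powersetCard.mp hT
    by_contra hcon
    push_neg at hcon
    set U : Finset ι := E ∪ S.filter (fun v => f v ∈ T) with hUdef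
    have hdisj : Disjoint E (S.filter (fun v => f v ∈ T)) := by
      rw [disjoint_left]
      intro v hvE hvS
      exact (mem_filter.mp hvE).2 (mem_filter.mp (mem_filter.mp hvS).1).2
    have hfib : (S.filter (fun v => f v ∈ T)).card = ∑ c ∈ T, (B c).card := by
      rw [card_eq_sum_card_fiberwise (f := f) (s := S.filter (fun v => f v ∈ T)) (t := T)
        (fun v hv => (mem_filter.mp hv).2)]
      refine Finset.sum_congr rfl (fun c hc => ?_)
      congr 1
      ext v
      simp only [mem_filter, hBdef]
      constructor
      · rintro ⟨⟨h1, _⟩, h3⟩; exact ⟨h1, h3⟩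
      · rintro ⟨h1, h2⟩; exact ⟨⟨h1, h2 ▸ hc⟩, h2⟩
    have hUcard : U.card = E.card + (∑ c ∈ T, (B c).card) := by
      rw [hUdef, card_union_of_disjoint hdisj, hfib]
    have hmU : m ≤ U.card := by omega
    obtain ⟨W, hWU, hWcard⟩ := Finset.exists_subset_card_eq hmU
    have hWV : W ⊆ V := hWU.trans
      (union_subset (filter_subset _ _) ((filter_subset _ _).trans hSV))
    obtain ⟨K, hKW, hKcard, hKne⟩ := hagree W hWV hWcard
    obtain ⟨x, hx⟩ := hKne
    have hxmem : ∀ v ∈ K, x ∈ A v := fun v hv => Set.mem_iInter₂.mp hx v hv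
    have hKmaps : ∀ v ∈ K, v ∈ S ∧ f v ∈ T := by
      intro v hv
      rcases mem_union.mp (hWU (hKW hv)) with h | h
      · exact absurd ⟨x, hxmem v hv⟩ (mem_filter.mp h).2
      · exact ⟨(mem_filter.mp h).1, (mem_filter.mp h).2⟩
    have hcardlt : T.card < K.card := by omega
    obtain ⟨u, hu, w, hw, huw, hfeq⟩ :=
      Finset.exists_ne_map_eq_of_card_lt_of_maps_to hcardlt (fun v hv => (hKmaps v hv).2)
    have hempty := hf2 u (hKmaps u hu).1 w (hKmaps w hw).1 huw hfeq
    exact absurd hempty (Set.nonempty_iff_ne_empty.mp ⟨x, hxmem u hu, hxmem w hw⟩)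
  -- maximizing (k-1)-subset of colors
  have hPne : (Finset.powersetCard (k-1) (Finset.range a)).Nonempty := by
    rw [Finset.powersetCard_nonempty, card_range]; omega
  obtain ⟨T, hTmem, hTmax⟩ :=
    (Finset.powersetCard (k-1) (Finset.range a)).exists_max_image
      (fun T => ∑ c ∈ T, (B c).card) hPne
  obtain ⟨hTsub, hTcard⟩ := mem_powersetCard.mp hTmem
  -- swap argument
  have hswap : ∀ c' ∈ Finset.range a \ T,
      (k-1) * (B c').card ≤ ∑ c ∈ T, (B c).card := by
    intro c' hc'
    obtain ⟨hc'r, hc'T⟩ := mem_sdiff.mp hc'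
    have hle : ∀ c ∈ T, (B c').card ≤ (B c).card := by
      intro c hc
      have hc'e : c' ∉ T.erase c := fun h => hc'T (erase_subset _ _ h)
      have hT' : insert c' (T.erase c) ∈ Finset.powersetCard (k-1) (Finset.range a) := by
        rw [mem_powersetCard]
        refine ⟨insert_subset hc'r ((erase_subset _ _).trans hTsub), ?_⟩
        rw [card_insert_of_notMem hc'e, card_erase_of_mem hc, hTcard]
        omega
      have hmax := hTmax _ hT'
      rw [sum_insert hc'e] at hmax
      have h2 : ∑ x ∈ T.erase c, (B x).card + (B c).card = ∑ x ∈ T, (B x).card :=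
        Finset.sum_erase_add T _ hc
      omega
    calc (k-1) * (B c').card = ∑ _c ∈ T, (B c').card := by
          rw [sum_const, hTcard, smul_eq_mul]
      _ ≤ ∑ c ∈ T, (B c).card := Finset.sum_le_sum hle
  -- main counting inequality
  have hmain : (k-1) * S.card ≤ a * (∑ c ∈ T, (B c).card) := by
    have hsplit : ∑ c ∈ Finset.range a \ T, (B c).card + ∑ c ∈ T, (B c).card
        = ∑ c ∈ Finset.range a, (B c).card := Finset.sum_sdiff hTsub
    have h1 : (k-1) * (∑ c ∈ Finset.range a \ T, (B c).card)
        ≤ (a - (k-1)) * (∑ c ∈ T, (B c).card) := by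
      rw [Finset.mul_sum]
      calc ∑ c' ∈ Finset.range a \ T, (k-1) * (B c').card
          ≤ ∑ _c' ∈ Finset.range a \ T, ∑ c ∈ T, (B c).card := Finset.sum_le_sum hswap
        _ = (Finset.range a \ T).card * (∑ c ∈ T, (B c).card) := by
            rw [sum_const, smul_eq_mul]
        _ = (a - (k-1)) * (∑ c ∈ T, (B c).card) := by
            rw [card_sdiff_of_subset hTsub, card_range, hTcard]
    have h2 : (k-1) * S.card
        = (k-1) * (∑ c ∈ Finset.range a \ T, (B c).card)
          + (k-1) * (∑ c ∈ T, (B c).card) := by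
      rw [← Nat.mul_add, hsplit, ← hpart]
    have h3 : (a - (k-1)) * (∑ c ∈ T, (B c).card) + (k-1) * (∑ c ∈ T, (B c).card)
        = a * (∑ c ∈ T, (B c).card) := by
      rw [← Nat.add_mul, Nat.sub_add_cancel (by omega : k - 1 ≤ a)]
    omega
  have hEScard : E.card + S.card = n := by
    rw [← hn, hEdef, hSdef]
    rw [add_comm]
    exact Finset.card_filter_add_card_filter_not _
  have hSumBound := hTbound T hTmem
  -- conclusion
  set p : ℝ := l v0 with hpdef
  have hpX : p ∈ X := hsubX v0 hv0S (hbasic v0 hv0S).1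
  refine ⟨p, hpX, ?_⟩
  have hseteq : {v ∈ (V : Set ι) | p ∈ A v} = ↑(V.filter (fun v => p ∈ A v)) := by
    ext v; simp
  rw [hseteq, Set.ncard_coe_finset]
  have hacard : a ≤ (V.filter (fun v => p ∈ A v)).card :=
    card_le_card (filter_subset_filter _ hSV)
  -- numeric part
  have hm1 : (0:ℝ) < (m:ℝ) - 1 := by
    have : (2:ℝ) ≤ m := by exact_mod_cast le_trans hk hkm
    linarith
  rw [div_le_iff₀ hm1]
  have hq1 : ((k:ℝ) - 1) * (S.card : ℝ) ≤ (a:ℝ) * ((∑ c ∈ T, (B c).card : ℕ) : ℝ) := by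
    have := hmain
    have hcast : (((k-1) * S.card : ℕ) : ℝ) ≤ ((a * (∑ c ∈ T, (B c).card) : ℕ) : ℝ) := by
      exact_mod_cast this
    push_cast [Nat.cast_sub (by omega : 1 ≤ k)] at hcast
    convert hcast using 2 <;> push_cast <;> ring
  have hq2 : ((∑ c ∈ T, (B c).card : ℕ) : ℝ) ≤ (m:ℝ) - 1 - (E.card : ℝ) := by
    have h : ((∑ c ∈ T, (B c).card : ℕ) : ℝ) + (E.card:ℝ) + 1 ≤ (m:ℝ) := by
      exact_mod_cast hSumBound
    linarith
  have hq3 : (k:ℝ) ≤ (a:ℝ) := by exact_mod_cast hka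
  have hq4 : (0:ℝ) ≤ (E.card : ℝ) := Nat.cast_nonneg _
  have hq5 : (E.card : ℝ) + (S.card : ℝ) = (n : ℝ) := by exact_mod_cast hEScard
  have ha0 : (0:ℝ) ≤ (a:ℝ) := Nat.cast_nonneg _
  have hp1 : (a:ℝ) * ((∑ c ∈ T, (B c).card : ℕ) : ℝ) ≤ (a:ℝ) * ((m:ℝ) - 1 - E.card) :=
    mul_le_mul_of_nonneg_left hq2 ha0
  have hp2 : ((k:ℝ) - 1) * (E.card:ℝ) ≤ (a:ℝ) * (E.card:ℝ) :=
    mul_le_mul_of_nonneg_right (by linarith) hq4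
  have hfinal : (n:ℝ) * ((k:ℝ) - 1) ≤ (a:ℝ) * ((m:ℝ) - 1) := by
    rw [← hq5]
    nlinarith [hq1, hp1, hp2]
  calc (n:ℝ) * ((k:ℝ) - 1) ≤ (a:ℝ) * ((m:ℝ) - 1) := hfinal
    _ ≤ ((V.filter (fun v => p ∈ A v)).card : ℝ) * ((m:ℝ) - 1) := by
        have : (a:ℝ) ≤ ((V.filter (fun v => p ∈ A v)).card : ℝ) := by exact_mod_cast hacard
        nlinarith
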